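/- Let U ⊆ ℝⁿ be a nonempty convex set and f: U → I(ℝ) a convex interval valued function. Then for every x₀ ∈ U and v ∈ ℝⁿ, the function φ(t) = (1/t)(f(x₀ + tv) −_gH f(x₀)), defined for t > 0 with x₀ + tv ∈ U, is monotonically increasing with respect to ⪯: if 0 < t ≤ s and x₀ + sv ∈ U, then φ(t) ⪯ φ(s). -/

import Mathlib

/-- A closed bounded interval `[lo, hi]` in `ℝ`. -/
structure IntervalR where
  lo : ℝ
  hi : ℝ
  lo_le_hi : lo ≤ hi

namespace IntervalR

/-- Minkowski sum of intervals. -/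
def add (A B : IntervalR) : IntervalR :=
  ⟨A.lo + B.lo, A.hi + B.hi, add_le_add A.lo_le_hi B.lo_le_hi⟩

/-- Scalar multiple of an interval. -/
noncomputable def smul (l : ℝ) (A : IntervalR) : IntervalR :=
  if h : 0 ≤ l then ⟨l * A.lo, l * A.hi, mul_le_mul_of_nonneg_left A.lo_le_hi h⟩
  else ⟨l * A.hi, l * A.lo, by nlinarith [A.lo_le_hi, lt_of_not_ge h]⟩

/-- Generalized Hukuhara difference. -/
def gH (A B : IntervalR) : IntervalR :=
  ⟨min (A.lo - B.lo) (A.hi - B.hi), max (A.lo - B.lo) (A.hi - B.hi), min_le_max⟩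

/-- Hausdorff metric on intervals. -/
def dH (A B : IntervalR) : ℝ := max |A.lo - B.lo| |A.hi - B.hi|

/-- The partial order `A ⪯ B`. -/
def le (A B : IntervalR) : Prop := A.lo ≤ B.lo ∧ A.hi ≤ B.hi

/-- The strict order `A ≺ B`. -/
def lt (A B : IntervalR) : Prop := le A B ∧ A ≠ B

/-- The degenerate interval `[0,0]`. -/
def zero : IntervalR := ⟨0, 0, le_refl 0⟩

end IntervalR

/-- `f` is a convex interval valued function on the convex set `U`. -/
def ConvexIVF {n : ℕ} (U : Set (EuclideanSpace ℝ (Fin n)))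
    (f : EuclideanSpace ℝ (Fin n) → IntervalR) : Prop :=
  ∀ x ∈ U, ∀ y ∈ U, ∀ t : ℝ, t ∈ Set.Icc (0 : ℝ) 1 →
    IntervalR.le (f (t • x + (1 - t) • y))
      (IntervalR.add (IntervalR.smul t (f x)) (IntervalR.smul (1 - t) (f y)))


private lemma diffq_aux (t s A B : ℝ) (ht : 0 < t) (hs : 0 < s) (h : A ≤ t / s * B) :
    1 / t * A ≤ 1 / s * B := by
  have h' : A * s ≤ B * t := by
    have := mul_le_mul_of_nonneg_right h hs.le
    calc A * s ≤ t / s * B * s := this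
      _ = B * t := by field_simp
  rw [mul_comm, mul_comm (1 / s), mul_one_div, mul_one_div]
  exact (div_le_div_iff₀ ht hs).mpr h'

theorem diff_quotient_monotone {n : ℕ} (U : Set (EuclideanSpace ℝ (Fin n)))
    (hne : U.Nonempty) (hU : Convex ℝ U)
    (f : EuclideanSpace ℝ (Fin n) → IntervalR) (hf : ConvexIVF U f)
    (x₀ : EuclideanSpace ℝ (Fin n)) (hx₀ : x₀ ∈ U) (v : EuclideanSpace ℝ (Fin n))
    (t s : ℝ) (ht : 0 < t) (hts : t ≤ s) (hs : x₀ + s • v ∈ U) :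
    IntervalR.le
      (IntervalR.smul (1 / t) (IntervalR.gH (f (x₀ + t • v)) (f x₀)))
      (IntervalR.smul (1 / s) (IntervalR.gH (f (x₀ + s • v)) (f x₀))) := by
  have hs' : 0 < s := lt_of_lt_of_le ht hts
  have hlam : t / s ∈ Set.Icc (0 : ℝ) 1 :=
    ⟨div_nonneg ht.le hs'.le, (div_le_one hs').mpr hts⟩
  have hpt : (t / s) • (x₀ + s • v) + (1 - t / s) • x₀ = x₀ + t • v := by
    have h1 : t / s * s = t := div_mul_cancel₀ t hs'.ne'
    rw [smul_add, smul_smul, h1, sub_smul, one_smul]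
    abel
  have key := hf (x₀ + s • v) hs x₀ hx₀ (t / s) hlam
  rw [hpt] at key
  set a := f (x₀ + t • v)
  set b := f x₀
  set c := f (x₀ + s • v)
  have hts0 : (0 : ℝ) ≤ t / s := div_nonneg ht.le hs'.le
  have h1ts0 : (0 : ℝ) ≤ 1 - t / s := by linarith [hlam.2]
  rw [IntervalR.le, IntervalR.add, IntervalR.smul, IntervalR.smul, dif_pos hts0,
    dif_pos h1ts0] at key
  obtain ⟨klo, khi⟩ := key
  have hlo : a.lo - b.lo ≤ t / s * (c.lo - b.lo) := by nlinarith [klo]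
  have hhi : a.hi - b.hi ≤ t / s * (c.hi - b.hi) := by nlinarith [khi]
  have ht0 : (0 : ℝ) ≤ 1 / t := by positivity
  have hs0 : (0 : ℝ) ≤ 1 / s := by positivity
  rw [IntervalR.smul, IntervalR.smul, dif_pos ht0, dif_pos hs0, IntervalR.le]
  simp only [IntervalR.gH]
  rw [mul_min_of_nonneg _ _ ht0, mul_min_of_nonneg _ _ hs0,
    mul_max_of_nonneg _ _ ht0, mul_max_of_nonneg _ _ hs0]
  constructor
  · refine le_min ?_ ?_
    · exact le_trans (min_le_left _ _) (diffq_aux t s _ _ ht hs' hlo)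
    · exact le_trans (min_le_right _ _) (diffq_aux t s _ _ ht hs' hhi)
  · refine max_le ?_ ?_
    · exact le_trans (diffq_aux t s _ _ ht hs' hlo) (le_max_left _ _)
    · exact le_trans (diffq_aux t s _ _ ht hs' hhi) (le_max_right _ _)
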